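/- Let g : [xL, xR] → [xL, xR] and f : [x̄L, x̄R] → [x̄L, x̄R] be increasing homeomorphisms such that g(x) > x for all x ∈ (xL, xR), f(x) > x for all x ∈ (x̄L, x̄R), and the endpoints are the only fixed points of g and f respectively. Then there exists an increasing homeomorphism h : [x̄L, x̄R] → [xL, xR] with g ∘ h = h ∘ f. -/

import Mathlib

open Set

namespace Stmt4Aux

lemma zpow_succ_apply (F : ℝ ≃o ℝ) (n : ℤ) (x : ℝ) : (F ^ (n+1)) x = F ((F ^ n) x) := by
  rw [add_comm, zpow_add, zpow_one]; rfl

lemma zpow_succ_apply' (F : ℝ ≃o ℝ) (n : ℤ) (x : ℝ) : (F ^ (n+1)) x = (F ^ n) (F x) := by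
  rw [zpow_add, zpow_one]; rfl

lemma zpow_pred_apply (F : ℝ ≃o ℝ) (n : ℤ) (x : ℝ) : (F ^ (n-1)) x = F.symm ((F ^ n) x) := by
  apply F.injective
  rw [F.apply_symm_apply, ← zpow_succ_apply, sub_add_cancel]

lemma zpow_neg_apply (F : ℝ ≃o ℝ) (n : ℤ) (x : ℝ) : (F ^ (-n)) ((F ^ n) x) = x := by
  rw [zpow_neg]; exact (F ^ n).symm_apply_apply x

lemma zpow_apply_neg (F : ℝ ≃o ℝ) (n : ℤ) (x : ℝ) : (F ^ n) ((F ^ (-n)) x) = x := by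
  rw [zpow_neg]; exact (F ^ n).apply_symm_apply x

section Orbit

lemma fix_a {F : ℝ ≃o ℝ} {a b : ℝ} (hfix : ∀ x, x ∉ Ioo a b → F x = x) : F a = a :=
  hfix a (fun h => lt_irrefl a h.1)

lemma fix_b {F : ℝ ≃o ℝ} {a b : ℝ} (hfix : ∀ x, x ∉ Ioo a b → F x = x) : F b = b :=
  hfix b (fun h => lt_irrefl b h.2)

lemma maps_Ioo {F : ℝ ≃o ℝ} {a b : ℝ} (hfix : ∀ x, x ∉ Ioo a b → F x = x)
    (hup : ∀ x ∈ Ioo a b, x < F x) : ∀ x ∈ Ioo a b, F x ∈ Ioo a b := by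
  intro x hx
  refine ⟨hx.1.trans (hup x hx), ?_⟩
  calc F x < F b := F.strictMono hx.2
    _ = b := fix_b hfix

lemma maps_Ioo_symm {F : ℝ ≃o ℝ} {a b : ℝ} (hfix : ∀ x, x ∉ Ioo a b → F x = x) :
    ∀ x ∈ Ioo a b, F.symm x ∈ Ioo a b := by
  intro x hx
  have ha : F.symm a = a := by
    conv_lhs => rw [← fix_a hfix]
    exact F.symm_apply_apply a
  have hb : F.symm b = b := by
    conv_lhs => rw [← fix_b hfix]
    exact F.symm_apply_apply b
  exact ⟨ha ▸ F.symm.strictMono hx.1, hb ▸ F.symm.strictMono hx.2⟩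

lemma zpow_mem {F : ℝ ≃o ℝ} {a b : ℝ} (hfix : ∀ x, x ∉ Ioo a b → F x = x)
    (hup : ∀ x ∈ Ioo a b, x < F x) : ∀ (n : ℤ), ∀ x ∈ Ioo a b, (F ^ n) x ∈ Ioo a b := by
  intro n x hx
  induction n using Int.induction_on with
  | zero => simpa using hx
  | succ n ih => rw [zpow_succ_apply]; exact maps_Ioo hfix hup _ ih
  | pred n ih =>
      rw [zpow_pred_apply]
      exact maps_Ioo_symm hfix _ ih

lemma seq_strictMono {F : ℝ ≃o ℝ} {a b : ℝ} (hfix : ∀ x, x ∉ Ioo a b → F x = x)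
    (hup : ∀ x ∈ Ioo a b, x < F x) {c : ℝ} (hc : c ∈ Ioo a b) :
    StrictMono (fun n : ℤ => (F ^ n) c) := by
  apply strictMono_int_of_lt_succ
  intro n
  show (F ^ n) c < (F ^ (n+1)) c
  rw [zpow_succ_apply]
  exact hup _ (zpow_mem hfix hup n c hc)

lemma seq_sup {F : ℝ ≃o ℝ} {a b : ℝ} (hfix : ∀ x, x ∉ Ioo a b → F x = x)
    (hup : ∀ x ∈ Ioo a b, x < F x) {c : ℝ} (hc : c ∈ Ioo a b) :
    sSup (range fun n : ℤ => (F ^ n) c) = b := by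
  set S := range fun n : ℤ => (F ^ n) c with hS
  have hne : S.Nonempty := ⟨(F ^ (0:ℤ)) c, ⟨0, rfl⟩⟩
  have hmem : ∀ y ∈ S, y ∈ Ioo a b := by
    rintro y ⟨n, rfl⟩; exact zpow_mem hfix hup n c hc
  have hbdd : BddAbove S := ⟨b, fun y hy => (hmem y hy).2.le⟩
  have himg : F '' S = S := by
    ext y
    simp only [hS, mem_image, mem_range]
    constructor
    · rintro ⟨-, ⟨n, rfl⟩, rfl⟩
      exact ⟨n + 1, by rw [zpow_succ_apply]⟩
    · rintro ⟨n, rfl⟩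
      refine ⟨(F ^ (n-1)) c, ⟨n - 1, rfl⟩, ?_⟩
      rw [← zpow_succ_apply, sub_add_cancel]
  have hFs : F (sSup S) = sSup S := by
    rw [F.map_csSup' hne hbdd, himg]
  have hsle : sSup S ≤ b := csSup_le hne (fun y hy => (hmem y hy).2.le)
  have has : a < sSup S := by
    have : c ≤ sSup S := le_csSup hbdd ⟨0, by simp⟩
    exact lt_of_lt_of_le hc.1 this
  rcases eq_or_lt_of_le hsle with h | h
  · exact h
  · exact absurd hFs (ne_of_gt (hup _ ⟨has, h⟩))

lemma seq_inf {F : ℝ ≃o ℝ} {a b : ℝ} (hfix : ∀ x, x ∉ Ioo a b → F x = x)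
    (hup : ∀ x ∈ Ioo a b, x < F x) {c : ℝ} (hc : c ∈ Ioo a b) :
    sInf (range fun n : ℤ => (F ^ n) c) = a := by
  set S := range fun n : ℤ => (F ^ n) c with hS
  have hne : S.Nonempty := ⟨(F ^ (0:ℤ)) c, ⟨0, rfl⟩⟩
  have hmem : ∀ y ∈ S, y ∈ Ioo a b := by
    rintro y ⟨n, rfl⟩; exact zpow_mem hfix hup n c hc
  have hbdd : BddBelow S := ⟨a, fun y hy => (hmem y hy).1.le⟩
  have himg : F.symm '' S = S := by
    ext y
    simp only [hS, mem_image, mem_range]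
    constructor
    · rintro ⟨-, ⟨n, rfl⟩, rfl⟩
      exact ⟨n - 1, by rw [zpow_pred_apply]⟩
    · rintro ⟨n, rfl⟩
      exact ⟨(F ^ (n+1)) c, ⟨n + 1, rfl⟩, by rw [zpow_succ_apply, F.symm_apply_apply]⟩
  have hFs : F.symm (sInf S) = sInf S := by
    rw [F.symm.map_csInf' hne hbdd, himg]
  have hsge : a ≤ sInf S := le_csInf hne (fun y hy => (hmem y hy).1.le)
  have hsb : sInf S < b := by
    have : sInf S ≤ c := csInf_le hbdd ⟨0, by simp⟩
    exact lt_of_le_of_lt this hc.2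
  rcases eq_or_lt_of_le hsge with h | h
  · exact h.symm
  · exfalso
    have h3 : F (sInf S) = sInf S := by
      apply F.symm.injective
      rw [F.symm_apply_apply, hFs]
    exact absurd h3 (ne_of_gt (hup _ ⟨h, hsb⟩))

lemma window_le {F : ℝ ≃o ℝ} {a b : ℝ} (hfix : ∀ x, x ∉ Ioo a b → F x = x)
    (hup : ∀ x ∈ Ioo a b, x < F x) {c : ℝ} (hc : c ∈ Ioo a b) {m n : ℤ} {x : ℝ}
    (h1 : (F ^ m) c ≤ x) (h2 : x < (F ^ (n+1)) c) : m ≤ n := by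
  by_contra hmn
  push_neg at hmn
  have h3 : (F ^ (n+1)) c ≤ (F ^ m) c :=
    (seq_strictMono hfix hup hc).monotone (by omega : n + 1 ≤ m)
  linarith

lemma exists_window {F : ℝ ≃o ℝ} {a b : ℝ} (hfix : ∀ x, x ∉ Ioo a b → F x = x)
    (hup : ∀ x ∈ Ioo a b, x < F x) {c : ℝ} (hc : c ∈ Ioo a b) :
    ∀ x ∈ Ioo a b, ∃ n : ℤ, (F ^ n) c ≤ x ∧ x < (F ^ (n+1)) c := by
  intro x hx
  have hne : (range fun n : ℤ => (F ^ n) c).Nonempty := ⟨(F ^ (0:ℤ)) c, ⟨0, rfl⟩⟩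
  obtain ⟨-, ⟨n1, rfl⟩, hn1⟩ : ∃ y ∈ (range fun n : ℤ => (F ^ n) c), x < y := by
    apply exists_lt_of_lt_csSup hne
    rw [seq_sup hfix hup hc]; exact hx.2
  obtain ⟨-, ⟨n0, rfl⟩, hn0⟩ : ∃ y ∈ (range fun n : ℤ => (F ^ n) c), y < x := by
    apply exists_lt_of_csInf_lt hne
    rw [seq_inf hfix hup hc]; exact hx.1
  have Hbdd : ∃ ub : ℤ, ∀ z : ℤ, (F ^ z) c ≤ x → z ≤ ub := by
    refine ⟨n1, fun z hz => ?_⟩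
    exact ((seq_strictMono hfix hup hc).lt_iff_lt.1 (lt_of_le_of_lt hz hn1)).le
  obtain ⟨k, hk, hmax⟩ := Int.exists_greatest_of_bdd Hbdd ⟨n0, hn0.le⟩
  refine ⟨k, hk, ?_⟩
  by_contra hcon
  push_neg at hcon
  have := hmax (k+1) hcon
  omega

end Orbit




theorem key (F G : ℝ ≃o ℝ) (a b A B : ℝ) (hab : a < b) (hAB : A < B)
    (hF0 : ∀ x, x ∉ Ioo a b → F x = x) (hF1 : ∀ x ∈ Ioo a b, x < F x)
    (hG0 : ∀ x, x ∉ Ioo A B → G x = x) (hG1 : ∀ x ∈ Ioo A B, x < G x) :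
    ∃ h : ℝ → ℝ, StrictMonoOn h (Icc a b) ∧ BijOn h (Icc a b) (Icc A B) ∧
      ∀ x ∈ Icc a b, G (h x) = h (F x) := by
  classical
  set c : ℝ := (a + b) / 2 with hcdef
  set d : ℝ := (A + B) / 2 with hddef
  have hc : c ∈ Ioo a b := ⟨by simp only [hcdef]; linarith, by simp only [hcdef]; linarith⟩
  have hd : d ∈ Ioo A B := ⟨by simp only [hddef]; linarith, by simp only [hddef]; linarith⟩
  set p : ℤ → ℝ := fun n => (F ^ n) c with hpdef
  set q : ℤ → ℝ := fun n => (G ^ n) d with hqdef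
  have hpm : StrictMono p := seq_strictMono hF0 hF1 hc
  have hqm : StrictMono q := seq_strictMono hG0 hG1 hd
  have hpmem : ∀ n, p n ∈ Ioo a b := fun n => zpow_mem hF0 hF1 n c hc
  have hqmem : ∀ n, q n ∈ Ioo A B := fun n => zpow_mem hG0 hG1 n d hd
  have hcF : c < F c := hF1 c hc
  have hdG : d < G d := hG1 d hd
  -- affine fundamental-domain map
  set h₀ : ℝ → ℝ := fun x => d + (x - c) * ((G d - d) / (F c - c)) with h0def
  have hFc : F c - c > 0 := by linarith
  have hGd : G d - d > 0 := by linarith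
  have hslope : (G d - d) / (F c - c) > 0 := div_pos hGd hFc
  have h₀c : h₀ c = d := by simp [h0def]
  have h₀Fc : h₀ (F c) = G d := by
    simp only [h0def]
    field_simp
    ring
  have h₀mono : StrictMono h₀ := by
    intro x y hxy
    simp only [h0def]
    have := mul_lt_mul_of_pos_right (sub_lt_sub_right hxy c) hslope
    linarith
  have h₀mem : ∀ y, c ≤ y → y < F c → d ≤ h₀ y ∧ h₀ y < G d := by
    intro y h1 h2
    constructor
    · rw [← h₀c]; exact h₀mono.monotone h1
    · rw [← h₀Fc]; exact h₀mono h2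
  -- window function
  have hwin : ∀ x : ℝ, ∃ n : ℤ, x ∈ Ioo a b → (p n ≤ x ∧ x < p (n+1)) := by
    intro x
    by_cases hx : x ∈ Ioo a b
    · obtain ⟨n, hn⟩ := exists_window hF0 hF1 hc x hx
      exact ⟨n, fun _ => hn⟩
    · exact ⟨0, fun hx' => absurd hx' hx⟩
  choose N hN using hwin
  set h : ℝ → ℝ := fun x =>
    if x ∈ Ioo a b then (G ^ (N x)) (h₀ ((F ^ (-(N x))) x)) else if x ≤ a then A else B
    with hhdef
  have ha : h a = A := by simp [hhdef]
  have hb : h b = B := by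
    simp only [hhdef]
    rw [if_neg (fun hco => lt_irrefl b hco.2), if_neg (not_le.2 hab)]
  -- key evaluation
  have hval : ∀ x, x ∈ Ioo a b →
      q (N x) ≤ h x ∧ h x < q (N x + 1) ∧
      h x = (G ^ (N x)) (h₀ ((F ^ (-(N x))) x)) := by
    intro x hx
    have hhx : h x = (G ^ (N x)) (h₀ ((F ^ (-(N x))) x)) := by
      simp only [hhdef, if_pos hx]
    obtain ⟨hp1, hp2⟩ := hN x hx
    set y : ℝ := (F ^ (-(N x))) x with hydef
    have hy1 : c ≤ y := by
      have : (F ^ (-(N x))) (p (N x)) = c := zpow_neg_apply F (N x) c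
      rw [← this]
      exact (F ^ (-(N x))).monotone hp1
    have hy2 : y < F c := by
      have : (F ^ (-(N x))) (p (N x + 1)) = F c := by
        have h1 : p (N x + 1) = (F ^ (N x)) (F c) := zpow_succ_apply' F (N x) c
        rw [h1]
        exact zpow_neg_apply F (N x) (F c)
      rw [← this]
      exact (F ^ (-(N x))).strictMono hp2
    obtain ⟨hz1, hz2⟩ := h₀mem y hy1 hy2
    refine ⟨?_, ?_, hhx⟩
    · rw [hhx]
      exact (G ^ (N x)).monotone hz1
    · rw [hhx]
      calc (G ^ (N x)) (h₀ y) < (G ^ (N x)) (G d) := (G ^ (N x)).strictMono hz2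
        _ = q (N x + 1) := (zpow_succ_apply' G (N x) d).symm
  have hIoo : ∀ x ∈ Ioo a b, h x ∈ Ioo A B := by
    intro x hx
    obtain ⟨h1, h2, -⟩ := hval x hx
    exact ⟨lt_of_lt_of_le (hqmem (N x)).1 h1, lt_trans h2 (hqmem (N x + 1)).2⟩
  -- strict monotonicity on Ioo
  have hmono' : ∀ x ∈ Ioo a b, ∀ y ∈ Ioo a b, x < y → h x < h y := by
    intro x hx y hy hxy
    obtain ⟨hx1, hx2, hxe⟩ := hval x hx
    obtain ⟨hy1, hy2, hye⟩ := hval y hy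
    have hNle : N x ≤ N y := window_le hF0 hF1 hc ((hN x hx).1.trans hxy.le) (hN y hy).2
    rcases eq_or_lt_of_le hNle with hEq | hLt
    · rw [hxe, hye, ← hEq]
      apply (G ^ (N x)).strictMono
      apply h₀mono
      exact (F ^ (-(N x))).strictMono hxy
    · calc h x < q (N x + 1) := hx2
        _ ≤ q (N y) := hqm.monotone (by omega)
        _ ≤ h y := hy1
  have hmonoIcc : StrictMonoOn h (Icc a b) := by
    intro x hx y hy hxy
    rcases eq_or_lt_of_le hx.1 with hxa | hxa
    · -- x = a
      rcases eq_or_lt_of_le hy.2 with hyb | hyb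
      · rw [← hxa, hyb, ha, hb]; exact hAB
      · have hyi : y ∈ Ioo a b := ⟨lt_of_le_of_lt hx.1 hxy, hyb⟩
        rw [← hxa, ha]
        exact (hIoo y hyi).1
    · have hxi : x ∈ Ioo a b := ⟨hxa, lt_of_lt_of_le hxy hy.2⟩
      rcases eq_or_lt_of_le hy.2 with hyb | hyb
      · rw [hyb, hb]
        exact (hIoo x hxi).2
      · exact hmono' x hxi y ⟨lt_trans hxa hxy, hyb⟩ hxy
  -- surjectivity
  have hsurj : SurjOn h (Icc a b) (Icc A B) := by
    intro z hz
    rcases eq_or_lt_of_le hz.1 with hzA | hzA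
    · exact ⟨a, left_mem_Icc.2 hab.le, by rw [ha, hzA]⟩
    rcases eq_or_lt_of_le hz.2 with hzB | hzB
    · exact ⟨b, right_mem_Icc.2 hab.le, by rw [hb, hzB]⟩
    have hzi : z ∈ Ioo A B := ⟨hzA, hzB⟩
    obtain ⟨m, hm1, hm2⟩ := exists_window hG0 hG1 hd z hzi
    set w : ℝ := (G ^ (-m)) z with hwdef
    have hw1 : d ≤ w := by
      have : (G ^ (-m)) (q m) = d := zpow_neg_apply G m d
      rw [← this]; exact (G ^ (-m)).monotone hm1
    have hw2 : w < G d := by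
      have : (G ^ (-m)) (q (m+1)) = G d := by
        have h1 : q (m + 1) = (G ^ m) (G d) := zpow_succ_apply' G m d
        rw [h1]; exact zpow_neg_apply G m (G d)
      rw [← this]; exact (G ^ (-m)).strictMono hm2
    set u : ℝ := c + (w - d) * ((F c - c) / (G d - d)) with hudef
    have hu0 : h₀ u = w := by
      have h1 : F c - c ≠ 0 := ne_of_gt hFc
      have h2 : G d - d ≠ 0 := ne_of_gt hGd
      simp only [hudef, h0def]
      field_simp
      ring
    have hslope' : (F c - c) / (G d - d) > 0 := div_pos hFc hGd
    have hwd0 : (0:ℝ) ≤ w - d := by linarith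
    have hu1 : c ≤ u := by
      have h3 : (0:ℝ) ≤ (w - d) * ((F c - c) / (G d - d)) :=
        mul_nonneg hwd0 hslope'.le
      simp only [hudef]
      linarith
    have hu2 : u < F c := by
      have hkey : (w - d) * ((F c - c) / (G d - d)) < F c - c := by
        have h2 : (G d - d) * ((F c - c) / (G d - d)) = F c - c := by
          field_simp
        calc (w - d) * ((F c - c) / (G d - d))
            < (G d - d) * ((F c - c) / (G d - d)) :=
              mul_lt_mul_of_pos_right (by linarith) hslope'
          _ = F c - c := h2
      simp only [hudef]
      linarith
    have hFcb : F c < b := (maps_Ioo hF0 hF1 c hc).2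
    have hui : u ∈ Ioo a b := ⟨lt_of_lt_of_le hc.1 hu1, lt_trans hu2 hFcb⟩
    set x : ℝ := (F ^ m) u with hxdef
    have hxi : x ∈ Ioo a b := zpow_mem hF0 hF1 m u hui
    have hx1 : p m ≤ x := (F ^ m).monotone hu1
    have hx2 : x < p (m+1) := by
      have : (F ^ m) (F c) = p (m+1) := (zpow_succ_apply' F m c).symm
      rw [← this]
      exact (F ^ m).strictMono hu2
    have hNx : N x = m := le_antisymm
      (window_le hF0 hF1 hc (hN x hxi).1 hx2)
      (window_le hF0 hF1 hc hx1 (hN x hxi).2)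
    refine ⟨x, ⟨hxi.1.le, hxi.2.le⟩, ?_⟩
    obtain ⟨-, -, hxe⟩ := hval x hxi
    rw [hxe, hNx]
    have : (F ^ (-m)) x = u := by rw [hxdef]; exact zpow_neg_apply F m u
    rw [this, hu0, hwdef]
    exact zpow_apply_neg G m z
  -- conjugacy
  have hconj : ∀ x ∈ Icc a b, G (h x) = h (F x) := by
    intro x hx
    rcases eq_or_lt_of_le hx.1 with hxa | hxa
    · rw [← hxa, fix_a hF0, ha, fix_a hG0]
    rcases eq_or_lt_of_le hx.2 with hxb | hxb
    · rw [hxb, fix_b hF0, hb, fix_b hG0]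
    have hxi : x ∈ Ioo a b := ⟨hxa, hxb⟩
    have hFxi : F x ∈ Ioo a b := maps_Ioo hF0 hF1 x hxi
    obtain ⟨hx1, hx2⟩ := hN x hxi
    have hFx1 : p (N x + 1) ≤ F x := by
      calc p (N x + 1) = F (p (N x)) := zpow_succ_apply F (N x) c
        _ ≤ F x := F.monotone hx1
    have hFx2 : F x < p ((N x + 1) + 1) := by
      have e1 : p (N x + 1 + 1) = F (p (N x + 1)) := zpow_succ_apply F (N x + 1) c
      rw [e1]
      exact F.strictMono hx2
    have hNFx : N (F x) = N x + 1 := le_antisymm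
      (window_le hF0 hF1 hc (hN (F x) hFxi).1 hFx2)
      (window_le hF0 hF1 hc hFx1 (hN (F x) hFxi).2)
    obtain ⟨-, -, hxe⟩ := hval x hxi
    obtain ⟨-, -, hFxe⟩ := hval (F x) hFxi
    rw [hxe, hFxe, hNFx]
    have harg : (F ^ (-(N x + 1))) (F x) = (F ^ (-(N x))) x := by
      have e : (-(N x) : ℤ) = -(N x + 1) + 1 := by ring
      rw [e, zpow_succ_apply']
    rw [harg, zpow_succ_apply G (N x)]
  exact ⟨h, hmonoIcc, ⟨fun x hx => by
      rcases eq_or_lt_of_le hx.1 with h1 | h1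
      · rw [← h1, ha]; exact left_mem_Icc.2 hAB.le
      rcases eq_or_lt_of_le hx.2 with h2 | h2
      · rw [h2, hb]; exact right_mem_Icc.2 hAB.le
      · exact Ioo_subset_Icc_self (hIoo x ⟨h1, h2⟩),
    hmonoIcc.injOn, hsurj⟩, hconj⟩




lemma contOn {h : ℝ → ℝ} {a b A B : ℝ} (hm : StrictMonoOn h (Icc a b))
    (hB : BijOn h (Icc a b) (Icc A B)) : ContinuousOn h (Icc a b) := by
  let e1 : (Icc a b : Set ℝ) ≃o (h '' Icc a b : Set ℝ) := hm.orderIso h _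
  let e : (Icc a b : Set ℝ) ≃o (Icc A B : Set ℝ) :=
    e1.trans (OrderIso.setCongr _ _ hB.image_eq)
  have hcont : Continuous (restrict (Icc a b) h) := by
    have heq : restrict (Icc a b) h = (fun y : (Icc A B : Set ℝ) => (y : ℝ)) ∘ e := rfl
    rw [heq]
    exact continuous_subtype_val.comp e.continuous
  exact continuousOn_iff_continuous_restrict.2 hcont

lemma extend (f : ℝ → ℝ) (a b : ℝ) (hab : a < b) (hm : StrictMonoOn f (Icc a b))
    (hB : BijOn f (Icc a b) (Icc a b)) (hd : ∀ x ∈ Ioo a b, x < f x)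
    (hfixa : f a = a) (hfixb : f b = b) :
    ∃ F : ℝ ≃o ℝ, (∀ x ∈ Icc a b, F x = f x) ∧ (∀ x, x ∉ Ioo a b → F x = x) ∧
      (∀ x ∈ Ioo a b, x < F x) := by
  classical
  set fe : ℝ → ℝ := fun x => if x ∈ Icc a b then f x else x with fedef
  have hfeIcc : ∀ x ∈ Icc a b, fe x = f x := fun x hx => if_pos hx
  have hfemono : StrictMono fe := by
    intro x y hxy
    by_cases hx : x ∈ Icc a b <;> by_cases hy : y ∈ Icc a b
    · simp only [fedef, if_pos hx, if_pos hy]; exact hm hx hy hxy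
    · simp only [fedef, if_pos hx, if_neg hy]
      have hy' : b < y := by
        by_contra hco; push_neg at hco
        exact hy ⟨hx.1.trans hxy.le, hco⟩
      exact lt_of_le_of_lt (hB.mapsTo hx).2 hy'
    · simp only [fedef, if_neg hx, if_pos hy]
      have hx' : x < a := by
        by_contra hco; push_neg at hco
        exact hx ⟨hco, hxy.le.trans hy.2⟩
      exact hx'.trans_le (hB.mapsTo hy).1
    · simp only [fedef, if_neg hx, if_neg hy]; exact hxy
  have hfesurj : Function.Surjective fe := by
    intro y
    by_cases hy : y ∈ Icc a b
    · obtain ⟨x, hx, hfx⟩ := hB.surjOn hy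
      exact ⟨x, by rw [hfeIcc x hx, hfx]⟩
    · exact ⟨y, by simp only [fedef, if_neg hy]⟩
  refine ⟨StrictMono.orderIsoOfSurjective fe hfemono hfesurj, ?_, ?_, ?_⟩
  · intro x hx
    rw [show (StrictMono.orderIsoOfSurjective fe hfemono hfesurj : ℝ → ℝ) x = fe x from
      congrFun (StrictMono.coe_orderIsoOfSurjective fe hfemono hfesurj) x]
    exact hfeIcc x hx
  · intro x hx
    rw [show (StrictMono.orderIsoOfSurjective fe hfemono hfesurj : ℝ → ℝ) x = fe x from
      congrFun (StrictMono.coe_orderIsoOfSurjective fe hfemono hfesurj) x]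
    by_cases hx2 : x ∈ Icc a b
    · have hend : x = a ∨ x = b := by
        rcases eq_or_lt_of_le hx2.1 with h1 | h1
        · exact Or.inl h1.symm
        rcases eq_or_lt_of_le hx2.2 with h2 | h2
        · exact Or.inr h2
        · exact absurd ⟨h1, h2⟩ hx
      rw [hfeIcc x hx2]
      rcases hend with rfl | rfl
      · exact hfixa
      · exact hfixb
    · simp only [fedef, if_neg hx2]
  · intro x hx
    rw [show (StrictMono.orderIsoOfSurjective fe hfemono hfesurj : ℝ → ℝ) x = fe x from
      congrFun (StrictMono.coe_orderIsoOfSurjective fe hfemono hfesurj) x,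
      hfeIcc x (Ioo_subset_Icc_self hx)]
    exact hd x hx

end Stmt4Aux

open Stmt4Aux in
/-- increasing homeomorphisms of compact intervals fixing exactly the
two endpoints and lying strictly above the diagonal in the interior are conjugate
by an increasing homeomorphism. -/
theorem stmt_4
    (f g : ℝ → ℝ) (xL xR xbL xbR : ℝ)
    (hI : xL < xR) (hJ : xbL < xbR)
    (hgc : ContinuousOn g (Icc xL xR)) (hgm : StrictMonoOn g (Icc xL xR))
    (hgB : BijOn g (Icc xL xR) (Icc xL xR))
    (hfc : ContinuousOn f (Icc xbL xbR)) (hfm : StrictMonoOn f (Icc xbL xbR))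
    (hfB : BijOn f (Icc xbL xbR) (Icc xbL xbR))
    (hgd : ∀ x ∈ Ioo xL xR, x < g x)
    (hfd : ∀ x ∈ Ioo xbL xbR, x < f x)
    (hgfix : ∀ x ∈ Icc xL xR, g x = x ↔ x = xL ∨ x = xR)
    (hffix : ∀ x ∈ Icc xbL xbR, f x = x ↔ x = xbL ∨ x = xbR) :
    ∃ h : ℝ → ℝ, ContinuousOn h (Icc xbL xbR) ∧ StrictMonoOn h (Icc xbL xbR) ∧
      BijOn h (Icc xbL xbR) (Icc xL xR) ∧
      ∀ x ∈ Icc xbL xbR, g (h x) = h (f x) := by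
  obtain ⟨F, hFIcc, hF0, hF1⟩ := extend f xbL xbR hJ hfm hfB hfd
    ((hffix xbL (left_mem_Icc.2 hJ.le)).2 (Or.inl rfl))
    ((hffix xbR (right_mem_Icc.2 hJ.le)).2 (Or.inr rfl))
  obtain ⟨G, hGIcc, hG0, hG1⟩ := extend g xL xR hI hgm hgB hgd
    ((hgfix xL (left_mem_Icc.2 hI.le)).2 (Or.inl rfl))
    ((hgfix xR (right_mem_Icc.2 hI.le)).2 (Or.inr rfl))
  obtain ⟨h, hmono, hbij, hconj⟩ := key F G xbL xbR xL xR hJ hI hF0 hF1 hG0 hG1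
  refine ⟨h, contOn hmono hbij, hmono, hbij, ?_⟩
  intro x hx
  have h1 : g (h x) = G (h x) := (hGIcc (h x) (hbij.mapsTo hx)).symm
  have h2 : f x = F x := (hFIcc x hx).symm
  rw [h1, h2]
  exact hconj x hx
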